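/- There exists a unique positive real number ζ₀ such that ζ₀² + 1 = exp(ζ₀²/2); moreover ζ₀ > 1 and z² + 1 > exp(z²/2) for all z ∈ (0, ζ₀). -/

import Mathlib

open Real

noncomputable def gg (t : ℝ) : ℝ := (t + 1) / Real.exp (t / 2)

lemma gg_deriv (t : ℝ) : HasDerivAt gg ((1 - t) / (2 * Real.exp (t / 2))) t := by
  have h1 : HasDerivAt (fun t : ℝ => t + 1) 1 t := by
    simpa using (hasDerivAt_id t).add_const 1
  have h2 : HasDerivAt (fun t : ℝ => Real.exp (t / 2)) (Real.exp (t / 2) * (1 / 2)) t := by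
    have : HasDerivAt (fun t : ℝ => t / 2) (1 / 2) t := by
      simpa using (hasDerivAt_id t).div_const 2
    exact (Real.hasDerivAt_exp (t / 2)).comp t this
  have := h1.div h2 (Real.exp_pos _).ne'
  refine this.congr_deriv ?_
  have he := (Real.exp_pos (t / 2)).ne'
  field_simp
  ring

lemma gg_mono : StrictMonoOn gg (Set.Icc 0 1) := by
  apply strictMonoOn_of_deriv_pos (convex_Icc 0 1)
  · exact fun x _ => ((gg_deriv x).differentiableAt.continuousAt).continuousWithinAt
  · intro x hx
    rw [interior_Icc] at hx
    rw [(gg_deriv x).deriv]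
    have : 0 < 1 - x := by linarith [hx.2]
    positivity

lemma gg_anti : StrictAntiOn gg (Set.Ici 1) := by
  apply strictAntiOn_of_deriv_neg (convex_Ici 1)
  · exact fun x _ => ((gg_deriv x).differentiableAt.continuousAt).continuousWithinAt
  · intro x hx
    rw [interior_Ici] at hx
    rw [(gg_deriv x).deriv]
    have hx' := Set.mem_Ioi.mp hx
    have h1 : 1 - x < 0 := by linarith
    have h2 : 0 < 2 * Real.exp (x / 2) := by positivity
    exact div_neg_of_neg_of_pos h1 h2

lemma gg_iff (t : ℝ) : 1 < gg t ↔ Real.exp (t / 2) < t + 1 := by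
  rw [gg, lt_div_iff₀ (Real.exp_pos _), one_mul]

lemma gg_eq (t : ℝ) : gg t = 1 ↔ t + 1 = Real.exp (t / 2) := by
  rw [gg, div_eq_one_iff_eq (Real.exp_pos _).ne']

lemma exp_half_lt_two : Real.exp (1 / 2) < 2 := by
  have h : Real.exp (1 / 2) ^ 2 < 2 ^ 2 := by
    rw [← Real.exp_nat_mul]
    norm_num
    calc Real.exp 1 < 2.7182818286 := Real.exp_one_lt_d9
    _ < 4 := by norm_num
  have := Real.exp_pos (1 / 2 : ℝ)
  nlinarith
  
lemma gg_one : 1 < gg 1 := by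
  rw [gg_iff]
  have := exp_half_lt_two
  linarith

lemma gg_four : gg 4 < 1 := by
  rw [gg, div_lt_one (Real.exp_pos _)]
  have h : (4 : ℝ) / 2 = 1 + 1 := by norm_num
  rw [h, Real.exp_add]
  nlinarith [Real.exp_one_gt_d9]

theorem stmt_0 :
    ∃ ζ : ℝ, 0 < ζ ∧ ζ ^ 2 + 1 = Real.exp (ζ ^ 2 / 2) ∧
      (∀ z : ℝ, 0 < z → z ^ 2 + 1 = Real.exp (z ^ 2 / 2) → z = ζ) ∧
      1 < ζ ∧
      (∀ z ∈ Set.Ioo (0 : ℝ) ζ, z ^ 2 + 1 > Real.exp (z ^ 2 / 2)) := by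
  -- find root t₀ ∈ [1,4] of gg = 1
  have hcont : ContinuousOn gg (Set.Icc 1 4) :=
    fun x _ => ((gg_deriv x).differentiableAt.continuousAt).continuousWithinAt
  have hiv : Set.Icc (gg 4) (gg 1) ⊆ gg '' Set.Icc 1 4 :=
    intermediate_value_Icc' (by norm_num) hcont
  obtain ⟨t₀, ht₀mem, ht₀⟩ := hiv ⟨le_of_lt gg_four, le_of_lt gg_one⟩
  have ht1 : 1 < t₀ := by
    rcases lt_or_eq_of_le ht₀mem.1 with h | h
    · exact h
    · exfalso; rw [← h] at ht₀; linarith [gg_one, ht₀]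
  have hgt₀ : gg t₀ = 1 := ht₀
  -- gg > 1 on (0, t₀)
  have key : ∀ t : ℝ, 0 < t → t < t₀ → 1 < gg t := by
    intro t ht htl
    rcases le_or_gt t 1 with h | h
    · have h0 : gg 0 = 1 := by rw [gg_eq]; simp
      rcases eq_or_lt_of_le h with rfl | h'
      · exact gg_one
      · calc 1 = gg 0 := h0.symm
          _ < gg t := gg_mono ⟨le_refl 0, by norm_num⟩ ⟨ht.le, h⟩ ht
    · calc 1 = gg t₀ := hgt₀.symm
        _ < gg t := gg_anti (Set.mem_Ici.mpr h.le) (Set.mem_Ici.mpr ht1.le) htl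
  -- uniqueness at the level of t
  have tuniq : ∀ t : ℝ, 0 < t → gg t = 1 → t = t₀ := by
    intro t ht heq
    rcases lt_trichotomy t t₀ with h | h | h
    · exact absurd heq (by have := key t ht h; linarith)
    · exact h
    · have := gg_anti (Set.mem_Ici.mpr ht1.le) (Set.mem_Ici.mpr (by linarith)) h
      rw [heq, hgt₀] at this; linarith
  refine ⟨Real.sqrt t₀, Real.sqrt_pos.mpr (by linarith), ?_, ?_, ?_, ?_⟩
  · rw [Real.sq_sqrt (by linarith : (0:ℝ) ≤ t₀)]
    exact (gg_eq t₀).mp hgt₀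
  · intro z hz heq
    have h1 : gg (z ^ 2) = 1 := (gg_eq _).mpr heq
    have h2 : z ^ 2 = t₀ := tuniq _ (by positivity) h1
    rw [← h2, Real.sqrt_sq hz.le]
  · rw [show (1:ℝ) = Real.sqrt 1 by simp]
    exact Real.sqrt_lt_sqrt (by norm_num) ht1
  · intro z hz
    have hz2 : z ^ 2 < t₀ := by
      have := Real.sq_sqrt (by linarith : (0:ℝ) ≤ t₀)
      nlinarith [hz.1, hz.2, Real.sqrt_nonneg t₀]
    have := key (z ^ 2) (pow_pos hz.1 2) hz2
    rw [gg_iff] at this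
    linarith
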